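/- The sample-based SRRD approximation Ĉ_SRRD, defined with empirical averages over finite sets X₁,…,X₆ of state-action pairs replacing the expectations in C_SRRD, is invariant to potential shaping: for R'(s,a,s') = R(s,a,s') + γφ(s') − φ(s), Ĉ_SRRD(R')(s,a,s') = Ĉ_SRRD(R)(s,a,s'), provided all rewards appearing in the cross-product sums are defined. -/
import Mathlib


/-- The sample-based SRRD approximation, built from empirical averages over
finite nonempty sets `X₁, …, X₆` of state-action pairs, is invariant to
potential shaping. -/
theorem stmt7 {St Ac : Type*}
    (R : St → Ac → St → ℝ) (φ : St → ℝ) (γ : ℝ) (hγ0 : 0 ≤ γ) (hγ1 : γ ≤ 1)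
    (X1 X2 X3 X4 X5 X6 : Finset (St × Ac))
    (h1 : X1.Nonempty) (h2 : X2.Nonempty) (h3 : X3.Nonempty)
    (h4 : X4.Nonempty) (h5 : X5.Nonempty) (h6 : X6.Nonempty)
    (s : St) (a : Ac) (s' : St) :
    let N := fun (X : Finset (St × Ac)) => (X.card : ℝ)
    let Chat := fun (Q : St → Ac → St → ℝ) =>
      Q s a s'
      + (γ / N X1) * ∑ q ∈ X1, Q s' q.2 q.1
      - (1 / N X2) * ∑ q ∈ X2, Q s q.2 q.1
      - (γ / (N X3 * N X4)) * ∑ q ∈ X3, ∑ r ∈ X4, Q q.1 q.2 r.1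
      + (γ ^ 2 / (N X1 * N X5)) * ∑ q ∈ X1, ∑ r ∈ X5, Q q.1 q.2 r.1
      - (γ / (N X2 * N X6)) * ∑ q ∈ X2, ∑ r ∈ X6, Q q.1 q.2 r.1
      + (γ / (N X3 * N X6)) * ∑ q ∈ X3, ∑ r ∈ X6, Q q.1 q.2 r.1
      - (γ ^ 2 / (N X4 * N X5)) * ∑ q ∈ X4, ∑ r ∈ X5, Q q.1 q.2 r.1
    Chat (fun u b w => R u b w + γ * φ w - φ u) = Chat R := by
  intro N Chat
  have c1 : (N X1) ≠ 0 := Nat.cast_ne_zero.mpr (Finset.card_ne_zero_of_mem h1.choose_spec)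
  have c2 : (N X2) ≠ 0 := Nat.cast_ne_zero.mpr (Finset.card_ne_zero_of_mem h2.choose_spec)
  have c3 : (N X3) ≠ 0 := Nat.cast_ne_zero.mpr (Finset.card_ne_zero_of_mem h3.choose_spec)
  have c4 : (N X4) ≠ 0 := Nat.cast_ne_zero.mpr (Finset.card_ne_zero_of_mem h4.choose_spec)
  have c5 : (N X5) ≠ 0 := Nat.cast_ne_zero.mpr (Finset.card_ne_zero_of_mem h5.choose_spec)
  have c6 : (N X6) ≠ 0 := Nat.cast_ne_zero.mpr (Finset.card_ne_zero_of_mem h6.choose_spec)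
  simp only [Chat, Finset.sum_add_distrib, Finset.sum_sub_distrib, Finset.sum_const,
    nsmul_eq_mul, ← Finset.mul_sum]
  field_simp
  ring
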